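/- Let Z_N be a finite set of N = m + u elements, with m = u and m even, and let F be a set of functions from Z_N to ℝ. Let Z_m be an m-element subset chosen uniformly at random (without replacement) from Z_N and Z_u its complement. Then E[sup_{f∈F} (avg_f(Z_u) − avg_f(Z_m))] ≤ E[Q_{m,n}(F, Z_m)] for every n ∈ {1,...,m−1}, where Q_{m,n}(F, Z_m) = E_{Z_n}[sup_{f∈F} (avg_f(Z_m \ Z_n) − avg_f(Z_n))] with Z_n a uniformly random n-element subset of Z_m, and avg_f(S) denotes the average of f over the finite set S. -/

import Mathlib

open Finset

/-- Average of `f` over a finite set. -/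
noncomputable def favg {α : Type*} (f : α → ℝ) (S : Finset α) : ℝ :=
  (∑ x ∈ S, f x) / S.card

/-- Permutational Rademacher complexity of a finite nonempty class `F`
on the set `Zm`, with split parameter `n`. -/
noncomputable def PRC {α : Type*} [DecidableEq α] (F : Finset (α → ℝ))
    (hF : F.Nonempty) (Zm : Finset α) (n : ℕ) : ℝ :=
  (1 / (Zm.card.choose n : ℝ)) *
    ∑ S ∈ Zm.powersetCard n, F.sup' hF fun f => favg f (Zm \ S) - favg f S

section Aux

variable {α : Type*} [DecidableEq α]

/-- number of k-subsets of T containing a fixed x ∈ T -/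
lemma count_mem_powersetCard (T : Finset α) (k : ℕ) (hk : 1 ≤ k) {x : α} (hx : x ∈ T) :
    ((T.powersetCard k).filter (fun S => x ∈ S)).card = (T.card - 1).choose (k - 1) := by
  rw [← Finset.card_erase_of_mem hx, ← Finset.card_powersetCard]
  apply Finset.card_nbij' (fun S => S.erase x) (fun S => insert x S)
  · intro S hS
    simp only [Finset.mem_coe, Finset.mem_filter, Finset.mem_powersetCard] at hS ⊢
    exact ⟨Finset.erase_subset_erase x hS.1.1, by rw [Finset.card_erase_of_mem hS.2, hS.1.2]⟩
  · intro S hS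
    simp only [Finset.mem_coe, Finset.mem_powersetCard] at hS
    have hxS : x ∉ S := fun h => (Finset.notMem_erase x T) (hS.1 h)
    simp only [Finset.mem_coe, Finset.mem_filter, Finset.mem_powersetCard]
    refine ⟨⟨?_, ?_⟩, Finset.mem_insert_self x S⟩
    · exact Finset.insert_subset hx (hS.1.trans (Finset.erase_subset x T))
    · rw [Finset.card_insert_of_notMem hxS, hS.2]; omega
  · intro S hS
    simp only [Finset.mem_coe, Finset.mem_filter] at hS
    exact Finset.insert_erase hS.2
  · intro S hS
    simp only [Finset.mem_coe, Finset.mem_powersetCard] at hS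
    have hxS : x ∉ S := fun h => (Finset.notMem_erase x T) (hS.1 h)
    exact Finset.erase_insert hxS

lemma sum_favg_powersetCard (f : α → ℝ) (T : Finset α) (k : ℕ) (hk : 1 ≤ k)
    (hkT : k ≤ T.card) :
    ∑ S ∈ T.powersetCard k, favg f S = (T.card.choose k : ℝ) * favg f T := by
  have hT : 1 ≤ T.card := hk.trans hkT
  have h1 : ∀ S ∈ T.powersetCard k, favg f S = (∑ x ∈ T, if x ∈ S then f x else 0) / (k : ℝ) := by
    intro S hS
    rw [Finset.mem_powersetCard] at hS
    rw [favg, hS.2, Finset.sum_ite_mem, Finset.inter_eq_right.mpr hS.1]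
  rw [Finset.sum_congr rfl h1, ← Finset.sum_div, Finset.sum_comm]
  have h2 : ∀ x ∈ T, (∑ S ∈ T.powersetCard k, if x ∈ S then f x else 0)
      = ((T.card - 1).choose (k - 1) : ℝ) * f x := by
    intro x hx
    rw [Finset.sum_ite, Finset.sum_const_zero, add_zero, Finset.sum_const,
      count_mem_powersetCard T k hk hx, nsmul_eq_mul]
  rw [Finset.sum_congr rfl h2, ← Finset.mul_sum, favg]
  have hkey : (T.card - 1).choose (k - 1) * T.card = T.card.choose k * k := by
    have := Nat.add_one_mul_choose_eq (T.card - 1) (k - 1)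
    have e1 : T.card - 1 + 1 = T.card := by omega
    have e2 : k - 1 + 1 = k := by omega
    simp only [Nat.succ_eq_add_one, e1, e2] at this
    linarith [this]
  have hk0 : (k : ℝ) ≠ 0 := by positivity
  have hT0 : (T.card : ℝ) ≠ 0 := by positivity
  field_simp
  have : ((T.card - 1).choose (k - 1) : ℝ) * T.card = (T.card.choose k : ℝ) * k := by
    exact_mod_cast congrArg (Nat.cast : ℕ → ℝ) hkey
  linear_combination (∑ i ∈ T, f i) * this

end Aux

theorem symmetrization_upper {α : Type*} [DecidableEq α]
    (ZN : Finset α) (F : Finset (α → ℝ)) (hF : F.Nonempty)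
    (m u N n : ℕ) (hN : ZN.card = N) (hNmu : N = m + u) (hmu : m = u)
    (hme : Even m) (hn : 1 ≤ n) (hnm : n ≤ m - 1) :
    (1 / (N.choose m : ℝ)) *
        ∑ Zm ∈ ZN.powersetCard m,
          F.sup' hF (fun f => favg f (ZN \ Zm) - favg f Zm)
      ≤ (1 / (N.choose m : ℝ)) *
          ∑ Zm ∈ ZN.powersetCard m, PRC F hF Zm n := by
  have hnlem : n ≤ m := by omega
  have hnm1 : n + 1 ≤ m := by omega
  have h1mn : 1 ≤ m - n := by omega
  set C : ℝ := (m.choose n : ℝ) with hCdef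
  have hC : 0 < C := by
    have := Nat.choose_pos hnlem
    positivity
  set h : Finset α → Finset α → ℝ :=
    fun A B => F.sup' hF fun f => favg f A - favg f B with hhdef
  set P : Finset (Finset α × Finset α) :=
    ((ZN.powersetCard (m - n)) ×ˢ (ZN.powersetCard n)).filter
      (fun p => Disjoint p.1 p.2) with hPdef
  -- basic facts
  have hcardc : ∀ Zm ∈ ZN.powersetCard m, (ZN \ Zm).card = m := by
    intro Zm hZm
    obtain ⟨hsub, hcard⟩ := Finset.mem_powersetCard.mp hZm
    rw [Finset.card_sdiff_of_subset hsub, hcard, hN]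
    omega
  -- Claim (ii): reindexing of the PRC double sum
  have claim2 : ∑ Zm ∈ ZN.powersetCard m, ∑ S ∈ Zm.powersetCard n, h (Zm \ S) S
      = ∑ p ∈ P, h p.1 p.2 := by
    rw [Finset.sum_sigma']
    refine Finset.sum_nbij' (fun a => (a.1 \ a.2, a.2)) (fun p => ⟨p.1 ∪ p.2, p.2⟩)
      ?_ ?_ ?_ ?_ ?_
    · rintro ⟨Zm, S⟩ ha
      simp only [Finset.mem_sigma, Finset.mem_powersetCard] at ha
      obtain ⟨⟨hZ1, hZ2⟩, hS1, hS2⟩ := ha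
      simp only [hPdef, Finset.mem_filter, Finset.mem_product, Finset.mem_powersetCard]
      refine ⟨⟨⟨(Finset.sdiff_subset).trans hZ1, ?_⟩, hS1.trans hZ1, hS2⟩, Finset.sdiff_disjoint⟩
      rw [Finset.card_sdiff_of_subset hS1, hZ2, hS2]
    · rintro ⟨A, B⟩ hp
      simp only [hPdef, Finset.mem_filter, Finset.mem_product, Finset.mem_powersetCard] at hp
      obtain ⟨⟨⟨hA1, hA2⟩, hB1, hB2⟩, hd⟩ := hp
      simp only [Finset.mem_sigma, Finset.mem_powersetCard]
      refine ⟨⟨Finset.union_subset hA1 hB1, ?_⟩, Finset.subset_union_right, hB2⟩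
      rw [Finset.card_union_of_disjoint hd, hA2, hB2]
      omega
    · rintro ⟨Zm, S⟩ ha
      simp only [Finset.mem_sigma, Finset.mem_powersetCard] at ha
      have : Zm \ S ∪ S = Zm := Finset.sdiff_union_of_subset ha.2.1
      simp only [this]
    · rintro ⟨A, B⟩ hp
      simp only [hPdef, Finset.mem_filter, Finset.mem_product, Finset.mem_powersetCard] at hp
      have : (A ∪ B) \ B = A := by
        rw [Finset.union_sdiff_right, Finset.sdiff_eq_self_of_disjoint hp.2]
      simp only [this]
    · rintro ⟨Zm, S⟩ ha
      rfl
  -- counting lemma: number of Zm compatible with a fixed pair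
  have count2 : ∀ p ∈ P,
      ((ZN.powersetCard m).filter (fun Zm => p.1 ⊆ ZN \ Zm ∧ p.2 ⊆ Zm)).card
        = m.choose n := by
    rintro ⟨A, B⟩ hp
    simp only [hPdef, Finset.mem_filter, Finset.mem_product, Finset.mem_powersetCard] at hp
    obtain ⟨⟨⟨hA1, hA2⟩, hB1, hB2⟩, hd⟩ := hp
    have hBsub : B ⊆ (ZN \ A) := Finset.subset_sdiff.mpr ⟨hB1, hd.symm⟩
    have hground : ((ZN \ A) \ B).card = m := by
      rw [Finset.card_sdiff_of_subset hBsub, Finset.card_sdiff_of_subset hA1, hA2, hB2, hN]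
      omega
    have : ((ZN.powersetCard m).filter (fun Zm => A ⊆ ZN \ Zm ∧ B ⊆ Zm)).card
        = (((ZN \ A) \ B).powersetCard (m - n)).card := by
      apply Finset.card_nbij' (fun Zm => Zm \ B) (fun c => c ∪ B)
      · intro Zm hZm
        simp only [Finset.mem_coe, Finset.mem_filter, Finset.mem_powersetCard] at hZm
        obtain ⟨⟨hZ1, hZ2⟩, hc1, hc2⟩ := hZm
        have hdAZ : Disjoint A Zm := (Finset.subset_sdiff.mp hc1).2
        simp only [Finset.mem_coe, Finset.mem_powersetCard]
        constructor
        · rw [Finset.subset_sdiff, Finset.subset_sdiff]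
          exact ⟨⟨(Finset.sdiff_subset).trans hZ1,
            (Finset.disjoint_of_subset_left Finset.sdiff_subset hdAZ.symm)⟩,
            Finset.sdiff_disjoint⟩
        · rw [Finset.card_sdiff_of_subset hc2, hZ2, hB2]
      · intro c hc
        simp only [Finset.mem_coe, Finset.mem_powersetCard] at hc
        obtain ⟨hc1, hc2⟩ := hc
        have hcZN : c ⊆ ZN := hc1.trans ((Finset.sdiff_subset).trans Finset.sdiff_subset)
        have hcB : Disjoint c B := (Finset.subset_sdiff.mp hc1).2
        have hcA : Disjoint c A := by
          have := (Finset.subset_sdiff.mp ((Finset.subset_sdiff.mp hc1).1)).2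
          exact this
        simp only [Finset.mem_coe, Finset.mem_filter, Finset.mem_powersetCard]
        refine ⟨⟨Finset.union_subset hcZN hB1, ?_⟩, ?_, Finset.subset_union_right⟩
        · rw [Finset.card_union_of_disjoint hcB, hc2, hB2]
          omega
        · rw [Finset.subset_sdiff]
          exact ⟨hA1, Finset.disjoint_union_right.mpr ⟨hcA.symm, hd⟩⟩
      · intro Zm hZm
        simp only [Finset.mem_coe, Finset.mem_filter] at hZm
        exact Finset.sdiff_union_of_subset hZm.2.2
      · intro c hc
        simp only [Finset.mem_coe, Finset.mem_powersetCard] at hc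
        have hcB : Disjoint c B := (Finset.subset_sdiff.mp hc.1).2
        dsimp only
        rw [Finset.union_sdiff_right, Finset.sdiff_eq_self_of_disjoint hcB]
    rw [this, Finset.card_powersetCard, hground, Nat.choose_symm hnlem]
  -- Claim (i): the triple sum equals C times the sum over P
  have claim1 : ∑ Zm ∈ ZN.powersetCard m,
        ∑ A ∈ (ZN \ Zm).powersetCard (m - n), ∑ B ∈ Zm.powersetCard n, h A B
      = C * ∑ p ∈ P, h p.1 p.2 := by
    have inner : ∀ Zm ∈ ZN.powersetCard m,
        ∑ A ∈ (ZN \ Zm).powersetCard (m - n), ∑ B ∈ Zm.powersetCard n, h A B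
          = ∑ p ∈ P, if p.1 ⊆ ZN \ Zm ∧ p.2 ⊆ Zm then h p.1 p.2 else 0 := by
      intro Zm hZm
      obtain ⟨hsub, hcard⟩ := Finset.mem_powersetCard.mp hZm
      rw [← Finset.sum_product']
      have hset : ((ZN \ Zm).powersetCard (m - n)) ×ˢ (Zm.powersetCard n)
          = P.filter (fun p => p.1 ⊆ ZN \ Zm ∧ p.2 ⊆ Zm) := by
        ext p
        simp only [hPdef, Finset.mem_filter, Finset.mem_product, Finset.mem_powersetCard]
        constructor
        · rintro ⟨⟨h1, h2⟩, h3, h4⟩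
          have hd1 : Disjoint p.1 Zm := (Finset.subset_sdiff.mp h1).2
          exact ⟨⟨⟨⟨h1.trans Finset.sdiff_subset, h2⟩, h3.trans hsub, h4⟩,
            hd1.mono_right h3⟩, h1, h3⟩
        · rintro ⟨⟨⟨⟨_, h2⟩, _, h4⟩, _⟩, h5, h6⟩
          exact ⟨⟨h5, h2⟩, h6, h4⟩
      rw [hset, Finset.sum_filter]
    rw [Finset.sum_congr rfl inner, Finset.sum_comm]
    rw [Finset.mul_sum]
    refine Finset.sum_congr rfl fun p hp => ?_
    rw [Finset.sum_ite, Finset.sum_const, Finset.sum_const_zero, add_zero,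
      count2 p hp, nsmul_eq_mul]
  -- Jensen step
  have jensen : ∀ Zm ∈ ZN.powersetCard m,
      C * (C * F.sup' hF (fun f => favg f (ZN \ Zm) - favg f Zm))
        ≤ ∑ A ∈ (ZN \ Zm).powersetCard (m - n), ∑ B ∈ Zm.powersetCard n, h A B := by
    intro Zm hZm
    obtain ⟨hsub, hcard⟩ := Finset.mem_powersetCard.mp hZm
    have hcc : (ZN \ Zm).card = m := hcardc Zm hZm
    obtain ⟨f₀, hf₀, heq⟩ := Finset.exists_mem_eq_sup' hF
      (fun f => favg f (ZN \ Zm) - favg f Zm)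
    rw [heq]
    have e1 : ∑ B ∈ Zm.powersetCard n, favg f₀ B = C * favg f₀ Zm := by
      rw [sum_favg_powersetCard f₀ Zm n hn (by omega), hcard]
    have e2 : ∑ A ∈ (ZN \ Zm).powersetCard (m - n), favg f₀ A
        = C * favg f₀ (ZN \ Zm) := by
      rw [sum_favg_powersetCard f₀ _ (m - n) h1mn (by omega), hcc, Nat.choose_symm hnlem]
    have key : C * (C * (favg f₀ (ZN \ Zm) - favg f₀ Zm))
        = ∑ A ∈ (ZN \ Zm).powersetCard (m - n), ∑ B ∈ Zm.powersetCard n,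
            (favg f₀ A - favg f₀ B) := by
      have hB : ∀ A : Finset α, ∑ B ∈ Zm.powersetCard n, (favg f₀ A - favg f₀ B)
          = C * favg f₀ A - C * favg f₀ Zm := by
        intro A
        rw [Finset.sum_sub_distrib, Finset.sum_const, e1, Finset.card_powersetCard,
          hcard, nsmul_eq_mul]
      rw [Finset.sum_congr rfl (fun A _ => hB A), Finset.sum_sub_distrib,
        ← Finset.mul_sum, e2, Finset.sum_const, Finset.card_powersetCard, hcc,
        Nat.choose_symm hnlem, nsmul_eq_mul]
      ring
    rw [key]
    refine Finset.sum_le_sum fun A _ => Finset.sum_le_sum fun B _ => ?_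
    exact Finset.le_sup' (fun f => favg f A - favg f B) hf₀
  -- assemble
  have hPRC : ∑ Zm ∈ ZN.powersetCard m, PRC F hF Zm n
      = (1 / C) * ∑ p ∈ P, h p.1 p.2 := by
    rw [← claim2, Finset.mul_sum]
    refine Finset.sum_congr rfl fun Zm hZm => ?_
    rw [PRC, (Finset.mem_powersetCard.mp hZm).2]
  have main : C * ∑ Zm ∈ ZN.powersetCard m,
      F.sup' hF (fun f => favg f (ZN \ Zm) - favg f Zm) ≤ ∑ p ∈ P, h p.1 p.2 := by
    have h1 := Finset.sum_le_sum jensen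
    rw [claim1] at h1
    have h2 : C * (C * ∑ Zm ∈ ZN.powersetCard m,
        F.sup' hF (fun f => favg f (ZN \ Zm) - favg f Zm))
        = ∑ Zm ∈ ZN.powersetCard m,
            C * (C * F.sup' hF (fun f => favg f (ZN \ Zm) - favg f Zm)) := by
      rw [Finset.mul_sum]
      congr 1
      rw [Finset.mul_sum]
    rw [← h2] at h1
    exact le_of_mul_le_mul_left h1 hC
  have final : ∑ Zm ∈ ZN.powersetCard m,
        F.sup' hF (fun f => favg f (ZN \ Zm) - favg f Zm)
      ≤ ∑ Zm ∈ ZN.powersetCard m, PRC F hF Zm n := by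
    rw [hPRC, one_div, le_inv_mul_iff₀ hC]
    exact main
  exact mul_le_mul_of_nonneg_left final (by positivity)
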